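/- Hashing lemma for certificate games: let f be a (possibly partial) Boolean function, L ∈ ℕ, and t with 20 ≤ t ≤ 0.1L. Suppose for every x ∈ f⁻¹(0) and y ∈ f⁻¹(1) there are sets A_x, B_y ⊆ [n] with |A_x| = |B_y| = L such that every i ∈ A_x ∩ B_y satisfies x_i ≠ y_i, and L ≤ t·|A_x ∩ B_y|. Then there is a public coin strategy winning the certificate game with probability at least 1/(18t²) on every input pair; hence CG^pub(f) ≤ 18t². -/

import Mathlib

open Finset

section PargminAux

variable {n : ℕ}

private def pargmin (π : Equiv.Perm (Fin n)) (s : Finset (Fin n)) (hs : s.Nonempty) : Fin n :=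
  π.symm ((s.image π).min' (hs.image π))

private lemma pargmin_mem (π : Equiv.Perm (Fin n)) (s : Finset (Fin n)) (hs : s.Nonempty) :
    pargmin π s hs ∈ s := by
  obtain ⟨a, ha, hae⟩ := Finset.mem_image.mp ((s.image π).min'_mem (hs.image π))
  unfold pargmin
  rw [← hae, Equiv.symm_apply_apply]
  exact ha

private lemma pargmin_le (π : Equiv.Perm (Fin n)) (s : Finset (Fin n)) (hs : s.Nonempty)
    {j : Fin n} (hj : j ∈ s) : π (pargmin π s hs) ≤ π j := by
  unfold pargmin
  rw [Equiv.apply_symm_apply]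
  exact Finset.min'_le _ _ (Finset.mem_image_of_mem _ hj)

private lemma pargmin_eq (π : Equiv.Perm (Fin n)) (s : Finset (Fin n)) (hs : s.Nonempty)
    {i : Fin n} (hi : i ∈ s) (h : ∀ j ∈ s, π i ≤ π j) : pargmin π s hs = i := by
  have hm : (s.image π).min' (hs.image π) = π i :=
    le_antisymm (Finset.min'_le _ _ (Finset.mem_image_of_mem _ hi))
      (Finset.le_min' _ _ _ (by
        rintro m hmm
        obtain ⟨j, hj, rfl⟩ := Finset.mem_image.mp hmm
        exact h j hj))
  unfold pargmin
  rw [hm, Equiv.symm_apply_apply]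

private lemma swap_mem' {s : Finset (Fin n)} {i j a : Fin n} (hi : i ∈ s) (hj : j ∈ s)
    (ha : a ∈ s) : Equiv.swap i j a ∈ s := by
  rcases eq_or_ne a i with rfl | hai
  · rwa [Equiv.swap_apply_left]
  rcases eq_or_ne a j with rfl | haj
  · rwa [Equiv.swap_apply_right]
  · rwa [Equiv.swap_apply_of_ne_of_ne hai haj]

private lemma pargmin_mul_swap (π : Equiv.Perm (Fin n)) (s : Finset (Fin n)) (hs : s.Nonempty)
    {i j : Fin n} (hi : i ∈ s) (hj : j ∈ s) :
    pargmin (π * Equiv.swap i j) s hs = Equiv.swap i j (pargmin π s hs) := by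
  apply pargmin_eq
  · exact swap_mem' hi hj (pargmin_mem π s hs)
  · intro k hk
    have h1 : (π * Equiv.swap i j) (Equiv.swap i j (pargmin π s hs)) = π (pargmin π s hs) := by
      simp [Equiv.Perm.mul_apply]
    rw [h1, Equiv.Perm.mul_apply]
    exact pargmin_le π s hs (swap_mem' hi hj hk)

private lemma fiber_card_eq (s : Finset (Fin n)) (hs : s.Nonempty) {i j : Fin n}
    (hi : i ∈ s) (hj : j ∈ s) :
    (univ.filter fun π : Equiv.Perm (Fin n) => pargmin π s hs = i).card
      = (univ.filter fun π : Equiv.Perm (Fin n) => pargmin π s hs = j).card := by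
  apply Finset.card_bij' (fun π _ => π * Equiv.swap i j) (fun π _ => π * Equiv.swap i j)
  · intro π hπ
    rw [Finset.mem_filter] at hπ ⊢
    refine ⟨Finset.mem_univ _, ?_⟩
    rw [pargmin_mul_swap π s hs hi hj, hπ.2, Equiv.swap_apply_left]
  · intro π hπ
    rw [Finset.mem_filter] at hπ ⊢
    refine ⟨Finset.mem_univ _, ?_⟩
    rw [pargmin_mul_swap π s hs hi hj, hπ.2, Equiv.swap_apply_right]
  · intro π _
    rw [mul_assoc, Equiv.swap_mul_self, mul_one]
  · intro π _
    rw [mul_assoc, Equiv.swap_mul_self, mul_one]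

end PargminAux

/-- Hashing lemma for certificate games: let `f` be a (possibly partial) Boolean function,
`L ∈ ℕ` and `20 ≤ t ≤ 0.1·L`. If every `x ∈ f⁻¹(0)` and `y ∈ f⁻¹(1)` have sets
`A x, B y ⊆ [n]` of size exactly `L` such that every `i ∈ A x ∩ B y` satisfies `x i ≠ y i`,
and `L ≤ t·|A x ∩ B y|`, then there is a public coin strategy (a distribution over pairs of
deterministic strategies) winning the certificate game with probability at least
`1/(18t²)` on every input pair; hence `CG^pub(f) ≤ 18t²`. -/
theorem stmt_16 {n : ℕ} (hn : 0 < n) (f : (Fin n → Bool) → Option Bool)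
    (L : ℕ) (t : ℝ) (ht1 : 20 ≤ t) (ht2 : t ≤ 0.1 * L)
    (A B : (Fin n → Bool) → Finset (Fin n))
    (hcardA : ∀ x, f x = some false → (A x).card = L)
    (hcardB : ∀ y, f y = some true → (B y).card = L)
    (hcorrect : ∀ x y, f x = some false → f y = some true →
      ∀ i ∈ A x ∩ B y, x i ≠ y i)
    (hint : ∀ x y, f x = some false → f y = some true →
      (L : ℝ) ≤ t * ((A x ∩ B y).card : ℝ)) :
    ∃ p : (((Fin n → Bool) → Fin n) × ((Fin n → Bool) → Fin n)) → ℝ,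
      (∀ AB, 0 ≤ p AB) ∧ (∑ AB, p AB = 1) ∧
      ∀ x y, f x = some false → f y = some true →
        1 / (18 * t ^ 2) ≤
          ∑ AB ∈ univ.filter
            (fun AB : ((Fin n → Bool) → Fin n) × ((Fin n → Bool) → Fin n) =>
              AB.1 x = AB.2 y ∧ x (AB.1 x) ≠ y (AB.1 x)), p AB := by
  classical
  have ht0 : (0:ℝ) < t := lt_of_lt_of_le (by norm_num) ht1
  have hL0 : 0 < L := by
    by_contra h
    push_neg at h
    have hL : L = 0 := Nat.le_zero.mp h
    rw [hL] at ht2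
    norm_num at ht2
    linarith
  set Ω := Equiv.Perm (Fin n) with hΩ
  set N : ℕ := Fintype.card Ω with hN
  have hNpos : 0 < N := Fintype.card_pos
  set St : Ω → (((Fin n → Bool) → Fin n) × ((Fin n → Bool) → Fin n)) :=
    fun π => (fun x => if h : (A x).Nonempty then pargmin π (A x) h else ⟨0, hn⟩,
              fun y => if h : (B y).Nonempty then pargmin π (B y) h else ⟨0, hn⟩) with hSt
  refine ⟨fun AB => ((univ.filter fun π : Ω => St π = AB).card : ℝ) / N, ?_, ?_, ?_⟩
  · intro AB
    positivity
  · rw [← Finset.sum_div]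
    have hnat : ∑ AB : (((Fin n → Bool) → Fin n) × ((Fin n → Bool) → Fin n)),
        ((univ.filter fun π : Ω => St π = AB).card) = N := by
      rw [hN, ← Finset.card_univ]
      exact (Finset.card_eq_sum_card_fiberwise (fun π _ => Finset.mem_univ (St π))).symm
    rw [← Nat.cast_sum, hnat, div_self]
    exact Nat.cast_ne_zero.mpr hNpos.ne'
  · intro x y hx hy
    have hA := hcardA x hx
    have hB := hcardB y hy
    have hAne : (A x).Nonempty := Finset.card_pos.mp (by rw [hA]; exact hL0)
    have hBne : (B y).Nonempty := Finset.card_pos.mp (by rw [hB]; exact hL0)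
    set s : Finset (Fin n) := A x ∪ B y with hsdef
    have hsne : s.Nonempty := ⟨hAne.choose, Finset.mem_union_left _ hAne.choose_spec⟩
    have hLreal : (0:ℝ) < (L:ℝ) := by exact_mod_cast hL0
    have habpos : 0 < (A x ∩ B y).card := by
      by_contra h
      push_neg at h
      have h0 : (A x ∩ B y).card = 0 := Nat.le_zero.mp h
      have := hint x y hx hy
      rw [h0] at this
      norm_num at this
      linarith
    have hab : (A x ∩ B y).Nonempty := Finset.card_pos.mp habpos
    obtain ⟨i₀, hi₀⟩ := hab
    have hi₀s : i₀ ∈ s := Finset.mem_union_left _ (Finset.mem_of_mem_inter_left hi₀)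
    set c : ℕ := (univ.filter fun π : Ω => pargmin π s hsne = i₀).card with hc
    have hfib : ∀ i ∈ s, (univ.filter fun π : Ω => pargmin π s hsne = i).card = c :=
      fun i hi => fiber_card_eq s hsne hi hi₀s
    have hNc : N = s.card * c := by
      rw [hN, ← Finset.card_univ,
        Finset.card_eq_sum_card_fiberwise (fun π _ => pargmin_mem π s hsne),
        Finset.sum_congr rfl hfib, Finset.sum_const, smul_eq_mul]
    have hcpos : 0 < c := by
      rcases Nat.eq_zero_or_pos c with h | h
      · rw [h, mul_zero] at hNc; omega
      · exact h
    -- the winning set of permutations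
    set W : Finset Ω := univ.filter (fun π : Ω => pargmin π s hsne ∈ A x ∩ B y) with hW
    have hWcard : W.card = (A x ∩ B y).card * c := by
      rw [Finset.card_eq_sum_card_fiberwise
        (f := fun π : Ω => pargmin π s hsne) (s := W) (t := A x ∩ B y)
        (fun π hπ => (Finset.mem_filter.mp hπ).2)]
      rw [Finset.sum_congr rfl (fun i hi => ?_), Finset.sum_const, smul_eq_mul]
      have hfilt : W.filter (fun π : Ω => pargmin π s hsne = i)
          = univ.filter (fun π : Ω => pargmin π s hsne = i) := by
        ext π
        simp only [hW, Finset.mem_filter, Finset.mem_univ, true_and]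
        constructor
        · rintro ⟨_, h⟩; exact h
        · rintro h; exact ⟨h ▸ hi, h⟩
      rw [hfilt]
      exact hfib i (Finset.mem_union_left _ (Finset.mem_of_mem_inter_left hi))
    -- winning permutations yield winning strategy pairs
    have hwin : ∀ π ∈ W, St π ∈ univ.filter
        (fun AB : ((Fin n → Bool) → Fin n) × ((Fin n → Bool) → Fin n) =>
          AB.1 x = AB.2 y ∧ x (AB.1 x) ≠ y (AB.1 x)) := by
      intro π hπ
      have hmem : pargmin π s hsne ∈ A x ∩ B y := (Finset.mem_filter.mp hπ).2
      have hmA : pargmin π s hsne ∈ A x := Finset.mem_of_mem_inter_left hmem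
      have hmB : pargmin π s hsne ∈ B y := Finset.mem_of_mem_inter_right hmem
      have e1 : (St π).1 x = pargmin π s hsne := by
        show (if h : (A x).Nonempty then pargmin π (A x) h else ⟨0, hn⟩) = _
        rw [dif_pos hAne]
        exact pargmin_eq π (A x) hAne hmA
          (fun j hj => pargmin_le π s hsne (Finset.mem_union_left _ hj))
      have e2 : (St π).2 y = pargmin π s hsne := by
        show (if h : (B y).Nonempty then pargmin π (B y) h else ⟨0, hn⟩) = _
        rw [dif_pos hBne]
        exact pargmin_eq π (B y) hBne hmB
          (fun j hj => pargmin_le π s hsne (Finset.mem_union_right _ hj))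
      rw [Finset.mem_filter]
      refine ⟨Finset.mem_univ _, ?_, ?_⟩
      · rw [e1, e2]
      · rw [e1]; exact hcorrect x y hx hy _ hmem
    -- rewrite the sum as a count of permutations
    set P : (((Fin n → Bool) → Fin n) × ((Fin n → Bool) → Fin n)) → Prop :=
      fun AB => AB.1 x = AB.2 y ∧ x (AB.1 x) ≠ y (AB.1 x) with hP
    have hsum : ∑ AB ∈ univ.filter P, ((univ.filter fun π : Ω => St π = AB).card : ℝ)
        = ((univ.filter fun π : Ω => St π ∈ univ.filter P).card : ℝ) := by
      rw [← Nat.cast_sum]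
      congr 1
      rw [Finset.card_eq_sum_card_fiberwise
        (f := St) (s := univ.filter fun π : Ω => St π ∈ univ.filter P) (t := univ.filter P)
        (fun π hπ => (Finset.mem_filter.mp hπ).2)]
      refine (Finset.sum_congr rfl (fun AB hAB => ?_)).symm
      congr 1
      ext π
      simp only [Finset.mem_filter, Finset.mem_univ, true_and]
      constructor
      · rintro ⟨_, h⟩; exact h
      · rintro h
        refine ⟨?_, h⟩
        rw [h]
        exact (Finset.mem_filter.mp hAB).2
    have hsub : W ⊆ univ.filter (fun π : Ω => St π ∈ univ.filter P) := by
      intro π hπ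
      rw [Finset.mem_filter]
      exact ⟨Finset.mem_univ _, hwin π hπ⟩
    -- final computation
    rw [← Finset.sum_div, hsum]
    have hNr : (0:ℝ) < (N:ℝ) := by exact_mod_cast hNpos
    have hcW : (W.card : ℝ) = ((A x ∩ B y).card : ℝ) * c := by
      rw [hWcard]; push_cast; ring
    have hcN : (N : ℝ) = (s.card : ℝ) * c := by
      rw [hNc]; push_cast; ring
    have ha0 : (0:ℝ) < ((A x ∩ B y).card : ℝ) := by exact_mod_cast habpos
    have hc0 : (0:ℝ) < (c : ℝ) := by exact_mod_cast hcpos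
    have hu2L : ((s.card : ℝ)) ≤ 2 * L := by
      have h2 : s.card ≤ L + L := by
        have := Finset.card_union_le (A x) (B y)
        rw [hA, hB] at this
        exact this
      have h3 : ((s.card : ℝ)) ≤ ((L + L : ℕ) : ℝ) := by exact_mod_cast h2
      push_cast at h3
      linarith
    have hLa : (L:ℝ) ≤ t * ((A x ∩ B y).card : ℝ) := hint x y hx hy
    have hstep2 : 1 / (18 * t ^ 2) ≤ (W.card : ℝ) / N := by
      rw [div_le_div_iff₀ (by positivity) hNr, hcW, hcN]
      have e1 : ((s.card:ℝ)) ≤ 2 * t * ((A x ∩ B y).card : ℝ) := by nlinarith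
      nlinarith [mul_le_mul_of_nonneg_right e1 hc0.le,
        mul_nonneg (mul_nonneg (mul_nonneg ht0.le ha0.le) hc0.le)
          (by linarith : (0:ℝ) ≤ 9 * t - 1)]
    have hstep1 : (W.card : ℝ) / N ≤
        ((univ.filter fun π : Ω => St π ∈ univ.filter P).card : ℝ) / N := by
      gcongr
    linarith
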